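/- Let A be an abelian category with enough structure and V an object with a filtration 0 = V⁰ ⊆ V¹ ⊆ ⋯ ⊆ Vᵐ = V such that Vⁱ/Vⁱ⁻¹ ≅ Xᵢ, and suppose for each i there are objects Tᵢ with monomorphisms Xᵢ ↪ Tᵢ such that Ext¹(V/Vⁱ, Tᵢ) = 0 for all i. Then there is a monomorphism V ↪ ⊕ᵢ Tᵢ. -/

import Mathlib

/-- Extension lemma: a map `W →ₗ T` extends to `V →ₗ T` provided every short
exact sequence `0 → T → E → V/W → 0` splits. -/
theorem ext_extend {R V T : Type} [Ring R] [AddCommGroup V] [Module R V]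
    [AddCommGroup T] [Module R T] (W : Submodule R V) (f : W →ₗ[R] T)
    (hsplit : ∀ (E : Type) [AddCommGroup E] [Module R E]
      (φ : T →ₗ[R] E) (ψ : E →ₗ[R] V ⧸ W),
      Function.Injective φ → Function.Surjective ψ →
      LinearMap.range φ = LinearMap.ker ψ →
      ∃ s : (V ⧸ W) →ₗ[R] E, ψ ∘ₗ s = LinearMap.id) :
    ∃ G : V →ₗ[R] T, ∀ x : W, G x = f x := by
  set K : Submodule R (T × V) :=
    LinearMap.range (LinearMap.prod f (-W.subtype)) with hK
  let φ : T →ₗ[R] (T × V) ⧸ K := K.mkQ ∘ₗ LinearMap.inl R T V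
  let j : V →ₗ[R] (T × V) ⧸ K := K.mkQ ∘ₗ LinearMap.inr R T V
  have hKker : K ≤ LinearMap.ker (W.mkQ ∘ₗ LinearMap.snd R T V) := by
    rintro ⟨t, v⟩ ⟨x, hx⟩
    simp only [LinearMap.prod_apply, Function.prod, Prod.mk.injEq] at hx
    simp only [LinearMap.mem_ker, LinearMap.comp_apply, LinearMap.snd_apply,
      Submodule.mkQ_apply, Submodule.Quotient.mk_eq_zero]
    rw [← hx.2]
    simp only [LinearMap.neg_apply, Submodule.coe_subtype]
    exact neg_mem x.2
  let ψ : ((T × V) ⧸ K) →ₗ[R] V ⧸ W := K.liftQ (W.mkQ ∘ₗ LinearMap.snd R T V) hKker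
  have hφ : Function.Injective φ := by
    rw [← LinearMap.ker_eq_bot]
    rw [LinearMap.ker_eq_bot']
    intro t ht
    have : ((t, 0) : T × V) ∈ K := by
      simpa [φ, Submodule.Quotient.mk_eq_zero] using ht
    obtain ⟨x, hx⟩ := this
    simp only [LinearMap.prod_apply, Function.prod, LinearMap.neg_apply,
      Submodule.coe_subtype, Prod.mk.injEq] at hx
    have hx0 : (x : V) = 0 := by
      have := hx.2; simpa [neg_eq_zero] using this
    have : x = 0 := Subtype.ext hx0
    rw [← hx.1, this, map_zero]
  have hψ : Function.Surjective ψ := by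
    intro q
    obtain ⟨v, rfl⟩ := W.mkQ_surjective q
    exact ⟨j v, rfl⟩
  have hcomm : ∀ x : W, φ (f x) = j (x : V) := by
    intro x
    have : ((f x, 0) : T × V) - (0, (x : V)) ∈ K := by
      refine ⟨x, ?_⟩
      simp [Prod.ext_iff]
    simpa [φ, j, Submodule.Quotient.eq] using
      (Submodule.Quotient.eq K).2 this
  have hrange : LinearMap.range φ = LinearMap.ker ψ := by
    apply le_antisymm
    · rintro _ ⟨t, rfl⟩
      simp [φ, ψ, Submodule.liftQ_apply]
    · rintro q hq
      obtain ⟨⟨t, v⟩, rfl⟩ := K.mkQ_surjective q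
      have hv : v ∈ W := by
        simpa [ψ, Submodule.Quotient.mk_eq_zero] using hq
      refine ⟨t + f ⟨v, hv⟩, ?_⟩
      have : ((t + f ⟨v, hv⟩, 0) : T × V) - (t, v) ∈ K := by
        refine ⟨⟨v, hv⟩, ?_⟩
        simp [Prod.ext_iff]
      simpa [φ] using (Submodule.Quotient.eq K).2 this
  obtain ⟨s, hs⟩ := hsplit ((T × V) ⧸ K) φ ψ hφ hψ hrange
  have hmem : ∀ y : (T × V) ⧸ K, y - s (ψ y) ∈ LinearMap.range φ := by
    intro y
    rw [hrange, LinearMap.mem_ker, map_sub]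
    have : ψ (s (ψ y)) = ψ y := congrFun (congrArg DFunLike.coe hs) (ψ y)
    rw [this, sub_self]
  let r : ((T × V) ⧸ K) →ₗ[R] T :=
    (LinearEquiv.ofInjective φ hφ).symm.toLinearMap ∘ₗ
      LinearMap.codRestrict (LinearMap.range φ) (LinearMap.id - s ∘ₗ ψ)
        (fun y => hmem y)
  have hr : ∀ y, φ (r y) = y - s (ψ y) := by
    intro y
    have : (LinearEquiv.ofInjective φ hφ) (r y) =
        ⟨y - s (ψ y), hmem y⟩ := by
      simp [r, LinearMap.codRestrict, LinearMap.sub_apply]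
    have := congrArg (Subtype.val) this
    simpa [LinearEquiv.ofInjective_apply] using this
  refine ⟨r ∘ₗ j, ?_⟩
  intro x
  apply hφ
  have h1 : φ (r (j (x : V))) = j (x : V) - s (ψ (j (x : V))) := hr _
  have hψj : ψ (j (x : V)) = 0 := by
    simp [ψ, j, Submodule.Quotient.mk_eq_zero, x.2]
  show φ (r (j (x : V))) = φ (f x)
  rw [h1, hψj, map_zero, sub_zero, hcomm]

/-- Let `V` be a module with a filtration `0 = F 0 ⊆ F 1 ⊆ ⋯ ⊆ F m = V` whose
subquotients `F (i+1) / F i` are isomorphic to `X i`, and suppose for each `i`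
there are modules `T i` with monomorphisms `X i ↪ T i` such that
`Ext¹(V / F (i+1), T i) = 0` (expressed by: every short exact sequence
`0 → T i → E → V / F (i+1) → 0` splits). Then there is a monomorphism
`V ↪ ⊕ᵢ T i`. -/
theorem stmt12 {R : Type} [Ring R] {V : Type} [AddCommGroup V] [Module R V]
    (m : ℕ) (F : ℕ → Submodule R V)
    (hmono : Monotone F) (hbot : F 0 = ⊥) (htop : F m = ⊤)
    (X T : Fin m → Type)
    [∀ i, AddCommGroup (X i)] [∀ i, Module R (X i)]
    [∀ i, AddCommGroup (T i)] [∀ i, Module R (T i)]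
    (e : ∀ i : Fin m,
      ((F ((i : ℕ) + 1)) ⧸ (Submodule.comap (F ((i : ℕ) + 1)).subtype (F (i : ℕ))))
        ≃ₗ[R] X i)
    (ι : ∀ i : Fin m, X i →ₗ[R] T i) (hι : ∀ i, Function.Injective (ι i))
    (hext : ∀ i : Fin m, ∀ (E : Type) [AddCommGroup E] [Module R E]
      (φ : T i →ₗ[R] E) (ψ : E →ₗ[R] V ⧸ F ((i : ℕ) + 1)),
      Function.Injective φ → Function.Surjective ψ →
      LinearMap.range φ = LinearMap.ker ψ →
      ∃ s : (V ⧸ F ((i : ℕ) + 1)) →ₗ[R] E, ψ ∘ₗ s = LinearMap.id) :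
    ∃ g : V →ₗ[R] (∀ i : Fin m, T i), Function.Injective g := by
  have key : ∀ i : Fin m, ∃ G : V →ₗ[R] T i,
      ∀ x : F ((i : ℕ) + 1),
        G x = ((ι i) ∘ₗ (e i).toLinearMap ∘ₗ
          (Submodule.comap (F ((i : ℕ) + 1)).subtype (F (i : ℕ))).mkQ) x := by
    intro i
    exact ext_extend (F ((i : ℕ) + 1))
      ((ι i) ∘ₗ (e i).toLinearMap ∘ₗ
        (Submodule.comap (F ((i : ℕ) + 1)).subtype (F (i : ℕ))).mkQ)
      (hext i)
  choose G hG using key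
  refine ⟨LinearMap.pi G, ?_⟩
  rw [← LinearMap.ker_eq_bot, LinearMap.ker_eq_bot']
  intro v hv
  have hzero : ∀ i : Fin m, G i v = 0 := fun i => congrFun hv i
  suffices h : ∀ k, k ≤ m → v ∈ F k → v = 0 by
    exact h m le_rfl (htop ▸ Submodule.mem_top)
  intro k
  induction k with
  | zero =>
    intro _ hv0
    simpa using (hbot ▸ hv0 : v ∈ (⊥ : Submodule R V))
  | succ k ih =>
    intro hk hvk
    set i : Fin m := ⟨k, hk⟩ with hi
    have h1 := hG i ⟨v, hvk⟩
    rw [hzero i] at h1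
    have h2 : ((e i).toLinearMap ∘ₗ
        (Submodule.comap (F ((i : ℕ) + 1)).subtype (F (i : ℕ))).mkQ)
        ⟨v, hvk⟩ = 0 := by
      apply hι i
      rw [map_zero]
      exact h1.symm
    have h3 : ((Submodule.comap (F ((i : ℕ) + 1)).subtype (F (i : ℕ))).mkQ)
        ⟨v, hvk⟩ = 0 := by
      apply (e i).injective
      rw [map_zero]
      exact h2
    have h4 : (⟨v, hvk⟩ : F ((i : ℕ) + 1)) ∈
        Submodule.comap (F ((i : ℕ) + 1)).subtype (F (i : ℕ)) := by
      rwa [← Submodule.Quotient.mk_eq_zero]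
    exact ih (Nat.le_of_succ_le hk) h4
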